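/- Let G be a finite simple graph on a vertex set V, and let D be a family of 3-element subsets of V (triangles) such that: (i) two distinct vertices u, v are adjacent in G if and only if they both belong to some member of D; (ii) any two distinct vertices belong to at most one common member of D; (iii) every vertex belongs to exactly 3 members of D. Let T be the bipartite simple graph on V ⊔ D in which v ∈ V is adjacent to t ∈ D if and only if v ∈ t. Suppose f: V → ℝ satisfies A_G f = μ f with μ ≠ −3, and let λ ∈ ℝ satisfy λ² = μ + 3 (so λ ≠ 0). Define F on V ⊔ D by F(v) = f(v) for v ∈ V and F(t) = (1/λ)·Σ_{w ∈ t} f(w) for t ∈ D. Then A_T F = λ F. -/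

import Mathlib

/-- The `(Δ-Y)`-transformation associated to a family `D` of triangles on a vertex
set `V`: the bipartite graph on `V ⊕ D` in which `v : V` is adjacent to `t : D`
iff `v ∈ t`. -/
def DeltaY {V : Type*} (D : Finset (Finset V)) : SimpleGraph (V ⊕ {t // t ∈ D}) where
  Adj a b := (∃ v t, a = Sum.inl v ∧ b = Sum.inr t ∧ v ∈ t.val) ∨
             (∃ v t, a = Sum.inr t ∧ b = Sum.inl v ∧ v ∈ t.val)
  symm := by
    constructor
    rintro a b (⟨v, t, rfl, rfl, h⟩ | ⟨v, t, rfl, rfl, h⟩)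
    · exact Or.inr ⟨v, t, rfl, rfl, h⟩
    · exact Or.inl ⟨v, t, rfl, rfl, h⟩
  loopless := by
    constructor
    rintro a (⟨v, t, h1, h2, _⟩ | ⟨v, t, h1, h2, _⟩) <;> subst h1 <;> simp at h2

instance {V : Type*} [DecidableEq V] [Fintype V] (D : Finset (Finset V)) :
    DecidableRel (DeltaY D).Adj := fun a b =>
  inferInstanceAs (Decidable ((∃ v t, a = Sum.inl v ∧ b = Sum.inr t ∧ v ∈ t.val) ∨
      (∃ v t, a = Sum.inr t ∧ b = Sum.inl v ∧ v ∈ t.val)))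

/-- If `f` satisfies `A_G f = μ f` with `μ ≠ -3` and `λ² = μ + 3`, then the extension
`F` of `f` to the `(Δ-Y)`-transformation `T = DeltaY D`, defined on a triangle `t` by
`F(t) = (1/λ)·Σ_{w ∈ t} f(w)`, satisfies `A_T F = λ F`. -/
theorem deltaY_eigenfunction_lift {V : Type*} [Fintype V] [DecidableEq V]
    (G : SimpleGraph V) [DecidableRel G.Adj] (D : Finset (Finset V))
    (hcard : ∀ t ∈ D, t.card = 3)
    (hadj : ∀ u v : V, u ≠ v → (G.Adj u v ↔ ∃ t ∈ D, u ∈ t ∧ v ∈ t))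
    (huniq : ∀ u v : V, u ≠ v → ∀ t₁ ∈ D, ∀ t₂ ∈ D,
      u ∈ t₁ → v ∈ t₁ → u ∈ t₂ → v ∈ t₂ → t₁ = t₂)
    (hdeg : ∀ v : V, (D.filter (fun t => v ∈ t)).card = 3)
    (f : V → ℝ) (mu lam : ℝ)
    (hf : (G.adjMatrix ℝ).mulVec f = mu • f)
    (hmu : mu ≠ -3) (hlam : lam ^ 2 = mu + 3) :
    ((DeltaY D).adjMatrix ℝ).mulVec
        (Sum.elim f fun t => (1 / lam) * ∑ w ∈ t.val, f w) =
      lam • Sum.elim f fun t => (1 / lam) * ∑ w ∈ t.val, f w := by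
  have hlamne : lam ≠ 0 := by
    rintro rfl; apply hmu; nlinarith
  funext x
  rw [SimpleGraph.adjMatrix_mulVec_apply]
  cases x with
  | inl v =>
    -- neighbors of inl v are inr t for t ∋ v
    have hinj : Function.Injective (fun t : {x // x ∈ D.filter (fun t => v ∈ t)} =>
        (Sum.inr ⟨t.1, (Finset.mem_filter.mp t.2).1⟩ : V ⊕ {t // t ∈ D})) := by
      intro a b h; simp at h; exact h
    have hnbr : (DeltaY D).neighborFinset (Sum.inl v) =
        ((D.filter (fun t => v ∈ t)).attach.map
          ⟨fun t => Sum.inr ⟨t.1, (Finset.mem_filter.mp t.2).1⟩, hinj⟩) := by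
      ext y
      simp only [SimpleGraph.mem_neighborFinset, Finset.mem_map, Finset.mem_attach,
        Function.Embedding.coeFn_mk]
      cases y with
      | inl u => simp [DeltaY]
      | inr t =>
        simp only [DeltaY]
        constructor
        · rintro (⟨v', t', h1, h2, h3⟩ | ⟨v', t', h1, h2, h3⟩)
          · cases h1; cases h2
            exact ⟨⟨t.1, Finset.mem_filter.mpr ⟨t.2, h3⟩⟩, trivial, by simp⟩
          · exact absurd h1 (by simp)
        · rintro ⟨⟨s, hs⟩, -, h⟩
          obtain ⟨hsD, hvs⟩ := Finset.mem_filter.mp hs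
          refine Or.inl ⟨v, t, rfl, rfl, ?_⟩
          have : t = (⟨s, hsD⟩ : {t // t ∈ D}) := by
            cases h; rfl
          rw [this]; exact hvs
    rw [hnbr, Finset.sum_map]
    simp only [Function.Embedding.coeFn_mk, Sum.elim_inr, Sum.elim_inl, Pi.smul_apply,
      smul_eq_mul]
    rw [Finset.sum_attach (D.filter (fun t => v ∈ t)) (fun t => (1/lam) * ∑ w ∈ t, f w)]
    rw [← Finset.mul_sum]
    have key : ∑ t ∈ D.filter (fun t => v ∈ t), ∑ w ∈ t, f w = (mu + 3) * f v := by
      have h1 : ∀ t ∈ D.filter (fun t => v ∈ t),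
          ∑ w ∈ t, f w = f v + ∑ w ∈ t.erase v, f w := by
        intro t ht
        rw [← Finset.add_sum_erase _ _ (Finset.mem_filter.mp ht).2]
      rw [Finset.sum_congr rfl h1, Finset.sum_add_distrib, Finset.sum_const, hdeg v]
      have hdisj : (D.filter (fun t => v ∈ t) : Set (Finset V)).PairwiseDisjoint
          (fun t => t.erase v) := by
        intro t₁ h₁ t₂ h₂ hne
        simp only [Finset.coe_filter, Set.mem_setOf_eq] at h₁ h₂
        refine Finset.disjoint_left.mpr fun u hu1 hu2 => hne ?_
        obtain ⟨hu1v, hu1⟩ := Finset.mem_erase.mp hu1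
        obtain ⟨_, hu2⟩ := Finset.mem_erase.mp hu2
        exact huniq u v hu1v t₁ h₁.1 t₂ h₂.1 hu1 h₁.2 hu2 h₂.2
      have hbu : (D.filter (fun t => v ∈ t)).biUnion (fun t => t.erase v)
          = G.neighborFinset v := by
        ext u
        simp only [Finset.mem_biUnion, Finset.mem_filter, Finset.mem_erase,
          SimpleGraph.mem_neighborFinset]
        constructor
        · rintro ⟨t, ⟨htD, hvt⟩, hunv, hut⟩
          exact ((hadj v u (Ne.symm hunv)).mpr ⟨t, htD, hvt, hut⟩)
        · intro h
          have hne : v ≠ u := G.ne_of_adj h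
          obtain ⟨t, htD, hvt, hut⟩ := (hadj v u hne).mp h
          exact ⟨t, ⟨htD, hvt⟩, Ne.symm hne, hut⟩
      have h2 : ∑ t ∈ D.filter (fun t => v ∈ t), ∑ w ∈ t.erase v, f w
          = ∑ u ∈ G.neighborFinset v, f u := by
        rw [← hbu, Finset.sum_biUnion hdisj]
      have h3 : ∑ u ∈ G.neighborFinset v, f u = mu * f v := by
        have := congrFun hf v
        rwa [SimpleGraph.adjMatrix_mulVec_apply] at this
      rw [h2, h3]; push_cast; ring
    rw [key]
    rw [← hlam]; field_simp
  | inr t =>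
    have hnbr : (DeltaY D).neighborFinset (Sum.inr t) = t.val.map ⟨Sum.inl, Sum.inl_injective⟩ := by
      ext y
      simp only [SimpleGraph.mem_neighborFinset, Finset.mem_map, Function.Embedding.coeFn_mk]
      cases y with
      | inl u =>
        simp only [DeltaY]
        constructor
        · rintro (⟨v', t', h1, h2, h3⟩ | ⟨v', t', h1, h2, h3⟩)
          · exact absurd h1 (by simp)
          · cases h1; cases h2; exact ⟨u, h3, rfl⟩
        · rintro ⟨w, hw, h⟩
          injection h with h; subst h; exact Or.inr ⟨w, t, rfl, rfl, hw⟩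
      | inr s => simp [DeltaY]
    rw [hnbr, Finset.sum_map]
    simp only [Function.Embedding.coeFn_mk, Sum.elim_inl, Sum.elim_inr, Pi.smul_apply,
      smul_eq_mul]
    field_simp
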